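/- Let F(x)=1-e^{-x} for x≥0 and α=1. Then the Williamson transform satisfies G_F(x)=1-F(x)/x for x>0, and the Kendall renewal function R(x)=2/(1-G_F(x))-(1-F(x))/(1-G_F(x))^2 = (x/F(x))(2 - x(1-F(x))/F(x)); in particular R(x)/x→2 as x→∞. -/

import Mathlib

open MeasureTheory Filter Topology Real Set

lemma integral_t_exp_neg (x : ℝ) :
    ∫ t in (0:ℝ)..x, t * Real.exp (-t) = 1 - Real.exp (-x) - x * Real.exp (-x) := by
  have h : ∀ t ∈ Set.uIcc (0:ℝ) x,
      HasDerivAt (fun t => -(t + 1) * Real.exp (-t)) (t * Real.exp (-t)) t := by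
    intro t _
    have h1 : HasDerivAt (fun t : ℝ => Real.exp (-t)) (-Real.exp (-t)) t := by
      simpa [Function.comp_def] using (Real.hasDerivAt_exp (-t)).comp t (hasDerivAt_neg t)
    have h2 : HasDerivAt (fun t : ℝ => -(t + 1)) (-1) t := by
      simpa [Pi.neg_def] using ((hasDerivAt_id t).add_const 1).neg
    have := h2.mul h1
    exact this.congr_deriv (by ring)
  have := intervalIntegral.integral_eq_sub_of_hasDerivAt h (by
    apply Continuous.intervalIntegrable
    continuity)
  rw [this]; simp [Real.exp_zero]; ring

lemma integral_exp_neg' (x : ℝ) :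
    ∫ t in (0:ℝ)..x, Real.exp (-t) = 1 - Real.exp (-x) := by
  have h : ∀ t ∈ Set.uIcc (0:ℝ) x,
      HasDerivAt (fun t => -Real.exp (-t)) (Real.exp (-t)) t := by
    intro t _
    have h1 : HasDerivAt (fun t : ℝ => Real.exp (-t)) (-Real.exp (-t)) t := by
      simpa [Function.comp_def] using (Real.hasDerivAt_exp (-t)).comp t (hasDerivAt_neg t)
    simpa [Pi.neg_def] using h1.neg
  have := intervalIntegral.integral_eq_sub_of_hasDerivAt h (by
    apply Continuous.intervalIntegrable
    continuity)
  simpa using this.trans (by ring)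

theorem stmt13 (F G R : ℝ → ℝ)
    (hF : ∀ x, F x = 1 - Real.exp (-x))
    (hG : ∀ x > 0, G x = ∫ t in (0:ℝ)..x, (1 - t / x) * Real.exp (-t))
    (hR : ∀ x > 0, R x = 2 / (1 - G x) - (1 - F x) / (1 - G x) ^ 2) :
    (∀ x > 0, G x = 1 - F x / x) ∧
    (∀ x > 0, R x = (x / F x) * (2 - x * (1 - F x) / F x)) ∧
    Tendsto (fun x => R x / x) atTop (𝓝 2) := by
  have hFpos : ∀ x > 0, 0 < F x := by
    intro x hx
    rw [hF]
    have : Real.exp (-x) < 1 := by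
      rw [Real.exp_lt_one_iff]; linarith
    linarith
  have hGkey : ∀ x > 0, G x = 1 - F x / x := by
    intro x hx
    rw [hG x hx]
    have hsplit : ∀ t : ℝ, (1 - t / x) * Real.exp (-t)
        = Real.exp (-t) - (1 / x) * (t * Real.exp (-t)) := by
      intro t; field_simp
    simp_rw [hsplit]
    rw [intervalIntegral.integral_sub, intervalIntegral.integral_const_mul,
      integral_exp_neg', integral_t_exp_neg, hF]
    · field_simp; ring
    · exact (Real.continuous_exp.comp continuous_neg).intervalIntegrable _ _
    · apply Continuous.intervalIntegrable; continuity
  have hRkey : ∀ x > 0, R x = (x / F x) * (2 - x * (1 - F x) / F x) := by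
    intro x hx
    have hFx := hFpos x hx
    rw [hR x hx, hGkey x hx]
    have h1 : (1 : ℝ) - (1 - F x / x) = F x / x := by ring
    rw [h1]
    field_simp
  refine ⟨hGkey, hRkey, ?_⟩
  have heq : (fun x => R x / x) =ᶠ[atTop]
      fun x => 2 / F x - x * (1 - F x) / (F x) ^ 2 := by
    filter_upwards [eventually_gt_atTop 0] with x hx
    have hFx := hFpos x hx
    rw [hRkey x hx]
    field_simp
  rw [Filter.tendsto_congr' heq]
  have hF1 : Tendsto F atTop (𝓝 1) := by
    have : Tendsto (fun x : ℝ => 1 - Real.exp (-x)) atTop (𝓝 (1 - 0)) := by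
      exact (tendsto_const_nhds.sub (Real.tendsto_exp_neg_atTop_nhds_zero))
    simpa [funext hF] using this
  have hxe : Tendsto (fun x : ℝ => x * (1 - F x)) atTop (𝓝 0) := by
    have h0 : Tendsto (fun x : ℝ => x ^ 1 * Real.exp (-x)) atTop (𝓝 0) :=
      Real.tendsto_pow_mul_exp_neg_atTop_nhds_zero 1
    have : Tendsto (fun x : ℝ => x * Real.exp (-x)) atTop (𝓝 0) := by
      simpa using h0
    refine this.congr ?_
    intro x; rw [hF]; ring
  have h2 : Tendsto (fun x => 2 / F x - x * (1 - F x) / (F x) ^ 2) atTop (𝓝 (2 / 1 - 0 / 1 ^ 2)) := by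
    exact ((tendsto_const_nhds.div hF1 one_ne_zero).sub
      (hxe.div (hF1.pow 2) (by norm_num)))
  simpa using h2
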